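/- (Theorem 18 of the paper) If P₁ and P₂ are dense sets of infinite binary strings (dense subsets of the Cantor space 2^ω) and φ is a propositional L_{ω1ω}-formula such that every t ∈ P₁ satisfies φ and no t ∈ P₂ satisfies φ, then s(φ) ≥ ω². -/

import Mathlib

/-- Propositional `L_{ω₁ω}`-formulas over propositional symbols `p i`, `i : ℕ`,
in negation normal form. -/
inductive PFml : Type
  | pos : ℕ → PFml
  | neg : ℕ → PFml
  | and : PFml → PFml → PFml
  | or : PFml → PFml → PFml
  | iand : (ℕ → PFml) → PFml
  | ior : (ℕ → PFml) → PFml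

/-- Satisfaction of a propositional formula by an infinite binary string. -/
def PSat (t : ℕ → Bool) : PFml → Prop
  | .pos i => t i = true
  | .neg i => t i = false
  | .and φ ψ => PSat t φ ∧ PSat t ψ
  | .or φ ψ => PSat t φ ∨ PSat t ψ
  | .iand f => ∀ i : ℕ, PSat t (f i)
  | .ior f => ∃ i : ℕ, PSat t (f i)

universe u

/-- The natural (Hessenberg) sum of ordinals, as `Ordinal.nadd` was defined in Mathlib
(it has since been removed from Mathlib). -/
noncomputable def Ordinal.nadd (a b : Ordinal.{u}) : Ordinal.{u} :=
  max (⨆ x : Set.Iio a, Order.succ (Ordinal.nadd x.1 b))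
    (⨆ x : Set.Iio b, Order.succ (Ordinal.nadd a x.1))
termination_by (a, b)
decreasing_by
  · exact Prod.Lex.left _ _ x.2
  · exact Prod.Lex.right _ x.2

/-- Finite partial natural (Hessenberg) sums. -/
noncomputable def natSumPrefix (γ : ℕ → Ordinal) : ℕ → Ordinal
  | 0 => 0
  | n + 1 => Ordinal.nadd (natSumPrefix γ n) (γ n)

/-- The infinite natural sum. -/
noncomputable def inatSum (γ : ℕ → Ordinal) : Ordinal := ⨆ n : ℕ, natSumPrefix γ n


noncomputable def psize : PFml → Ordinal
  | .pos _ => 1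
  | .neg _ => 1
  | .and φ ψ => Ordinal.nadd (psize φ) (psize ψ)
  | .or φ ψ => Ordinal.nadd (psize φ) (psize ψ)
  | .iand f => inatSum fun i => psize (f i)
  | .ior f => inatSum fun i => psize (f i)

open Ordinal

infixl:65 " ♯ " => Ordinal.nadd

namespace OmegaSqAux

lemma nadd_lt_nadd_right' {a b x : Ordinal.{u}} (h : x < a) : x ♯ b < a ♯ b := by
  rw [Ordinal.nadd.eq_1 a b]
  exact (Order.lt_succ _).trans_le (le_max_of_le_left
    (le_ciSup (f := fun y : Set.Iio a => Order.succ (Ordinal.nadd y.1 b))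
      bddAbove_of_small ⟨x, h⟩))

lemma nadd_lt_nadd_left' {a b x : Ordinal.{u}} (h : x < b) : a ♯ x < a ♯ b := by
  rw [Ordinal.nadd.eq_1 a b]
  exact (Order.lt_succ _).trans_le (le_max_of_le_right
    (le_ciSup (f := fun y : Set.Iio b => Order.succ (Ordinal.nadd a y.1))
      bddAbove_of_small ⟨x, h⟩))

lemma nadd_le_nadd_right {a a' : Ordinal.{u}} (h : a ≤ a') (b : Ordinal.{u}) :
    a ♯ b ≤ a' ♯ b := by
  rcases h.eq_or_lt with rfl | h
  · exact le_rfl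
  · exact (nadd_lt_nadd_right' h).le

lemma nadd_le_nadd_left {b b' : Ordinal.{u}} (h : b ≤ b') (a : Ordinal.{u}) :
    a ♯ b ≤ a ♯ b' := by
  rcases h.eq_or_lt with rfl | h
  · exact le_rfl
  · exact (nadd_lt_nadd_left' h).le

lemma nadd_le_nadd {a b c d : Ordinal.{u}} (h₁ : a ≤ b) (h₂ : c ≤ d) : a ♯ c ≤ b ♯ d :=
  (nadd_le_nadd_left h₂ a).trans (nadd_le_nadd_right h₁ d)

lemma le_self_nadd {a b : Ordinal.{u}} : a ≤ a ♯ b :=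
  Ordinal.induction (p := fun a => a ≤ a ♯ b) a fun a ih =>
    le_of_forall_lt fun c hc => (ih c hc).trans_lt (nadd_lt_nadd_right' hc)

lemma le_nadd_self {a b : Ordinal.{u}} : b ≤ a ♯ b :=
  Ordinal.induction (p := fun b => b ≤ a ♯ b) b fun b ih =>
    le_of_forall_lt fun c hc => (ih c hc).trans_lt (nadd_lt_nadd_left' hc)

lemma le_nadd_right {a b c : Ordinal.{u}} (h : a ≤ b) : a ≤ b ♯ c :=
  h.trans le_self_nadd

lemma add_le_nadd (a b : Ordinal.{u}) : a + b ≤ a ♯ b :=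
  Ordinal.induction (p := fun b => a + b ≤ a ♯ b) b fun b ih => by
    rcases eq_or_ne b 0 with rfl | hb
    · simpa using (le_self_nadd (a := a) (b := 0))
    · exact le_of_forall_lt fun c hc => by
        obtain ⟨d, hd, hcd⟩ := (lt_add_iff hb).1 hc
        exact hcd.trans_lt ((ih d hd).trans_lt (nadd_lt_nadd_left' hd))

lemma natSumPrefix_mono (γ : ℕ → Ordinal) : Monotone (natSumPrefix γ) :=
  monotone_nat_of_le_succ fun n => by rw [natSumPrefix]; exact le_self_nadd

lemma natSumPrefix_le_inatSum (γ : ℕ → Ordinal) (n : ℕ) :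
    natSumPrefix γ n ≤ inatSum γ :=
  Ordinal.le_iSup (fun n => natSumPrefix γ n) n

lemma comp_le_natSumPrefix (γ : ℕ → Ordinal) (i : ℕ) : γ i ≤ natSumPrefix γ (i + 1) := by
  rw [natSumPrefix]; exact le_nadd_self

lemma comp_le_inatSum (γ : ℕ → Ordinal) (i : ℕ) : γ i ≤ inatSum γ :=
  (comp_le_natSumPrefix γ i).trans (natSumPrefix_le_inatSum γ (i + 1))

lemma one_le_psize (φ : PFml) : 1 ≤ psize φ := by
  induction φ with
  | pos i => exact le_refl _
  | neg i => exact le_refl _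
  | and φ ψ ihφ ihψ => exact le_nadd_right ihφ
  | or φ ψ ihφ ihψ => exact le_nadd_right ihφ
  | iand f ih => exact (ih 0).trans (comp_le_inatSum (fun i => psize (f i)) 0)
  | ior f ih => exact (ih 0).trans (comp_le_inatSum (fun i => psize (f i)) 0)

lemma nat_le_natSumPrefix {γ : ℕ → Ordinal} (h1 : ∀ i, 1 ≤ γ i) (n : ℕ) :
    (n : Ordinal) ≤ natSumPrefix γ n := by
  induction n with
  | zero => simp
  | succ n ih =>
    rw [natSumPrefix]
    calc ((n + 1 : ℕ) : Ordinal) = (n : Ordinal) + 1 := Nat.cast_succ n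
    _ ≤ (n : Ordinal) ♯ 1 := add_le_nadd _ _
    _ ≤ (natSumPrefix γ n) ♯ (γ n) := nadd_le_nadd ih (h1 n)

lemma omega0_le_inatSum {γ : ℕ → Ordinal} (h1 : ∀ i, 1 ≤ γ i) : ω ≤ inatSum γ :=
  omega0_le.2 fun n => (nat_le_natSumPrefix h1 n).trans (natSumPrefix_le_inatSum γ n)

lemma keyA {γ : ℕ → Ordinal} (h1 : ∀ i, 1 ≤ γ i) {c : Ordinal} {i : ℕ}
    (hc : ω * c ≤ γ i) : ω * c + ω ≤ inatSum γ := by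
  rw [add_le_iff_of_isSuccLimit isSuccLimit_omega0]
  intro b hb
  obtain ⟨k, rfl⟩ := lt_omega0.mp hb
  have claim : ∀ k : ℕ, ω * c + k ≤ natSumPrefix γ (i + 1 + k) := by
    intro k
    induction k with
    | zero => simpa using hc.trans (comp_le_natSumPrefix γ i)
    | succ k ih =>
      have : i + 1 + (k + 1) = (i + 1 + k) + 1 := by omega
      rw [this, natSumPrefix]
      calc ω * c + ((k + 1 : ℕ) : Ordinal) = (ω * c + k) + 1 := by
            rw [Nat.cast_succ, add_assoc]
      _ ≤ (ω * c + k) ♯ 1 := add_le_nadd _ _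
      _ ≤ (natSumPrefix γ (i + 1 + k)) ♯ (γ (i + 1 + k)) := nadd_le_nadd ih (h1 _)
  exact (claim k).trans (natSumPrefix_le_inatSum γ _)

lemma keyB {γ : ℕ → Ordinal} (hinf : {i | ω ≤ γ i}.Infinite) : ω * ω ≤ inatSum γ := by
  rw [mul_le_iff_of_isSuccLimit isSuccLimit_omega0]
  intro b hb
  obtain ⟨m, rfl⟩ := lt_omega0.mp hb
  have claim : ∀ m : ℕ, ∃ N, ω * m ≤ natSumPrefix γ N := by
    intro m
    induction m with
    | zero => exact ⟨0, by simp⟩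
    | succ m ih =>
      obtain ⟨N, hN⟩ := ih
      obtain ⟨i, hiS, hiN⟩ := hinf.exists_gt N
      refine ⟨i + 1, ?_⟩
      rw [natSumPrefix]
      calc ω * ((m + 1 : ℕ) : Ordinal) = ω * m + ω := by rw [Nat.cast_succ, mul_add, mul_one]
      _ ≤ (ω * m) ♯ ω := add_le_nadd _ _
      _ ≤ (natSumPrefix γ N) ♯ (γ i) := nadd_le_nadd hN hiS
      _ ≤ (natSumPrefix γ i) ♯ (γ i) := nadd_le_nadd_right (natSumPrefix_mono γ hiN.le) _
  obtain ⟨N, hN⟩ := claim m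
  exact hN.trans (natSumPrefix_le_inatSum γ N)

/-- Finitary formulas: no infinite connectives. -/
inductive Finitary : PFml → Prop
  | pos (i : ℕ) : Finitary (.pos i)
  | neg (i : ℕ) : Finitary (.neg i)
  | and {φ ψ} : Finitary φ → Finitary ψ → Finitary (.and φ ψ)
  | or {φ ψ} : Finitary φ → Finitary ψ → Finitary (.or φ ψ)

lemma finitary_of_lt_omega0 : ∀ {φ : PFml}, psize φ < ω → Finitary φ := by
  intro φ
  induction φ with
  | pos i => exact fun _ => .pos i
  | neg i => exact fun _ => .neg i
  | and φ ψ ihφ ihψ =>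
    intro h
    rw [psize] at h
    exact .and (ihφ (lt_of_le_of_lt le_self_nadd h)) (ihψ (lt_of_le_of_lt le_nadd_self h))
  | or φ ψ ihφ ihψ =>
    intro h
    rw [psize] at h
    exact .or (ihφ (lt_of_le_of_lt le_self_nadd h)) (ihψ (lt_of_le_of_lt le_nadd_self h))
  | iand f ih =>
    intro h
    exact absurd ((omega0_le_inatSum fun i => one_le_psize (f i)).trans_lt h) (lt_irrefl ω)
  | ior f ih =>
    intro h
    exact absurd ((omega0_le_inatSum fun i => one_le_psize (f i)).trans_lt h) (lt_irrefl ω)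

lemma Finitary.inv : ∀ {φ : PFml}, Finitary φ →
    ∃ N : ℕ, ∀ t t' : ℕ → Bool, (∀ i < N, t i = t' i) → (PSat t φ ↔ PSat t' φ) := by
  intro φ hf
  induction hf with
  | pos i => exact ⟨i + 1, fun t t' h => by rw [PSat, PSat, h i (Nat.lt_succ_self i)]⟩
  | neg i => exact ⟨i + 1, fun t t' h => by rw [PSat, PSat, h i (Nat.lt_succ_self i)]⟩
  | and _ _ ih₁ ih₂ =>
    obtain ⟨N₁, h₁⟩ := ih₁; obtain ⟨N₂, h₂⟩ := ih₂
    refine ⟨max N₁ N₂, fun t t' h => ?_⟩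
    rw [PSat, PSat,
      h₁ t t' (fun i hi => h i (lt_of_lt_of_le hi (le_max_left _ _))),
      h₂ t t' (fun i hi => h i (lt_of_lt_of_le hi (le_max_right _ _)))]
  | or _ _ ih₁ ih₂ =>
    obtain ⟨N₁, h₁⟩ := ih₁; obtain ⟨N₂, h₂⟩ := ih₂
    refine ⟨max N₁ N₂, fun t t' h => ?_⟩
    rw [PSat, PSat,
      h₁ t t' (fun i hi => h i (lt_of_lt_of_le hi (le_max_left _ _))),
      h₂ t t' (fun i hi => h i (lt_of_lt_of_le hi (le_max_right _ _)))]

/-- `D` is dense below the cylinder determined by the first `n` values of `s`. -/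
def Dn (n : ℕ) (s : ℕ → Bool) (D : Set (ℕ → Bool)) : Prop :=
  ∀ (m : ℕ) (s' : ℕ → Bool), (∀ i < n, s' i = s i) → ∃ t ∈ D, ∀ i < m, t i = s' i

lemma Dn.mono {n : ℕ} {s : ℕ → Bool} {D : Set (ℕ → Bool)} (h : Dn n s D)
    {m : ℕ} {s' : ℕ → Bool} (hm : n ≤ m) (hs : ∀ i < n, s' i = s i) : Dn m s' D :=
  fun m₂ s₂ h₂ => h m₂ s₂ (fun i hi => (h₂ i (lt_of_lt_of_le hi hm)).trans (hs i hi))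

lemma finTrue {φ : PFml} (hf : Finitary φ) {N : ℕ} {s : ℕ → Bool} {D : Set (ℕ → Bool)}
    (hD : Dn N s D) (hsat : ∀ t ∈ D, PSat t φ) :
    ∀ t : ℕ → Bool, (∀ i < N, t i = s i) → PSat t φ := by
  obtain ⟨N₀, hinv⟩ := hf.inv
  intro t ht
  obtain ⟨t', ht'D, ht'⟩ := hD (max N N₀) t ht
  exact (hinv t' t fun i hi => ht' i (lt_of_lt_of_le hi (le_max_right _ _))).mp (hsat t' ht'D)

lemma finFalse {φ : PFml} (hf : Finitary φ) {N : ℕ} {s : ℕ → Bool} {D : Set (ℕ → Bool)}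
    (hD : Dn N s D) (hsat : ∀ t ∈ D, ¬ PSat t φ) :
    ∀ t : ℕ → Bool, (∀ i < N, t i = s i) → ¬ PSat t φ := by
  obtain ⟨N₀, hinv⟩ := hf.inv
  intro t ht hP
  obtain ⟨t', ht'D, ht'⟩ := hD (max N N₀) t ht
  exact hsat t' ht'D
    ((hinv t' t fun i hi => ht' i (lt_of_lt_of_le hi (le_max_right _ _))).mpr hP)

lemma finContr {φ : PFml} (hf : Finitary φ) {N : ℕ} {s : ℕ → Bool}
    {D₁ D₂ : Set (ℕ → Bool)} (hD₁ : Dn N s D₁) (hD₂ : Dn N s D₂)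
    (hs1 : ∀ t ∈ D₁, PSat t φ) (hs2 : ∀ t ∈ D₂, ¬ PSat t φ) : False := by
  obtain ⟨t, htD, ht⟩ := hD₁ N s (fun _ _ => rfl)
  exact finFalse hf hD₂ hs2 t ht (hs1 t htD)

/-- Somewhere-density: if finitely many sets jointly meet every subcylinder,
one of them is dense below some subcylinder. -/
lemma swd (Q : ℕ → Set (ℕ → Bool)) :
    ∀ (k n : ℕ) (s : ℕ → Bool),
      (∀ (m : ℕ) (s' : ℕ → Bool), (∀ i < n, s' i = s i) →
        ∃ t, (∀ i < m, t i = s' i) ∧ ∃ j < k, t ∈ Q j) →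
      ∃ j < k, ∃ m s', n ≤ m ∧ (∀ i < n, s' i = s i) ∧ Dn m s' (Q j) := by
  intro k
  induction k with
  | zero =>
    intro n s hd
    obtain ⟨t, _, j, hj, _⟩ := hd n s (fun _ _ => rfl)
    exact absurd hj (Nat.not_lt_zero j)
  | succ k ih =>
    intro n s hd
    by_cases h : ∃ m s', n ≤ m ∧ (∀ i < n, s' i = s i) ∧ Dn m s' (Q k)
    · obtain ⟨m, s', h1, h2, h3⟩ := h
      exact ⟨k, Nat.lt_succ_self k, m, s', h1, h2, h3⟩
    · have hnd : ¬ Dn n s (Q k) := fun hD => h ⟨n, s, le_refl n, fun _ _ => rfl, hD⟩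
      rw [Dn] at hnd
      push_neg at hnd
      obtain ⟨m₂, s₂, hagree, hno⟩ := hnd
      have hd' : ∀ (m : ℕ) (s'' : ℕ → Bool), (∀ i < max m₂ n, s'' i = s₂ i) →
          ∃ t, (∀ i < m, t i = s'' i) ∧ ∃ j < k, t ∈ Q j := by
        intro m s'' hss
        obtain ⟨t, ht, j, hj, hQ⟩ := hd (max m (max m₂ n)) s''
          (fun i hi => (hss i (lt_of_lt_of_le hi (le_max_right m₂ n))).trans (hagree i hi))
        rcases Nat.lt_succ_iff_lt_or_eq.mp hj with hj' | rfl
        · exact ⟨t, fun i hi => ht i (lt_of_lt_of_le hi (le_max_left _ _)), j, hj', hQ⟩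
        · exfalso
          obtain ⟨i, him, hne⟩ := hno t hQ
          have h1 : t i = s'' i := ht i (lt_of_lt_of_le him
            (le_trans (le_max_left m₂ n) (le_max_right m _)))
          have h2 : s'' i = s₂ i := hss i (lt_of_lt_of_le him (le_max_left m₂ n))
          exact hne (h1.trans h2)
      obtain ⟨j, hj, m', s''', hm', hag', hDn⟩ := ih (max m₂ n) s₂ hd'
      exact ⟨j, Nat.lt_succ_of_lt hj, m', s''', le_trans (le_max_right m₂ n) hm',
        fun i hi => (hag' i (lt_of_lt_of_le hi (le_max_right m₂ n))).trans (hagree i hi), hDn⟩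

lemma main : ∀ (n : ℕ) (φ : PFml), psize φ < ω * ((n : Ordinal) + 1) →
    ∀ (N : ℕ) (s : ℕ → Bool) (D₁ D₂ : Set (ℕ → Bool)),
      Dn N s D₁ → Dn N s D₂ → (∀ t ∈ D₁, PSat t φ) → (∀ t ∈ D₂, ¬ PSat t φ) → False := by
  intro n
  induction n with
  | zero =>
    intro φ hsz N s D₁ D₂ hD₁ hD₂ hs1 hs2
    have h : psize φ < ω := by simpa using hsz
    exact finContr (finitary_of_lt_omega0 h) hD₁ hD₂ hs1 hs2
  | succ n ih =>
    intro φ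
    induction φ with
    | pos i =>
      intro _ N s D₁ D₂ hD₁ hD₂ hs1 hs2
      exact finContr (.pos i) hD₁ hD₂ hs1 hs2
    | neg i =>
      intro _ N s D₁ D₂ hD₁ hD₂ hs1 hs2
      exact finContr (.neg i) hD₁ hD₂ hs1 hs2
    | and φ ψ ihφ ihψ =>
      intro hsz N s D₁ D₂ hD₁ hD₂ hs1 hs2
      rw [psize] at hsz
      have hd : ∀ (m : ℕ) (s' : ℕ → Bool), (∀ i < N, s' i = s i) →
          ∃ t, (∀ i < m, t i = s' i) ∧ ∃ j < 2, t ∈ (fun j =>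
            if j = 0 then D₂ ∩ {t | ¬ PSat t φ} else D₂ ∩ {t | ¬ PSat t ψ}) j := by
        intro m s' hss
        obtain ⟨t, htD, ht⟩ := hD₂ m s' hss
        have hns := hs2 t htD
        rw [PSat] at hns
        by_cases hA : PSat t φ
        · exact ⟨t, ht, 1, by omega,
            by simp only [if_neg one_ne_zero]; exact ⟨htD, fun hB => hns ⟨hA, hB⟩⟩⟩
        · exact ⟨t, ht, 0, by omega, by simp only [if_pos rfl]; exact ⟨htD, hA⟩⟩
      obtain ⟨j, hj2, m, s', hm, hag, hDn⟩ := swd _ 2 N s hd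
      by_cases hj0 : j = 0
      · subst hj0
        simp only [if_pos rfl] at hDn
        exact ihφ (lt_of_le_of_lt le_self_nadd hsz) m s' D₁ _ (hD₁.mono hm hag) hDn
          (fun t ht => (hs1 t ht).1) (fun t ht => ht.2)
      · simp only [if_neg hj0] at hDn
        exact ihψ (lt_of_le_of_lt le_nadd_self hsz) m s' D₁ _ (hD₁.mono hm hag) hDn
          (fun t ht => (hs1 t ht).2) (fun t ht => ht.2)
    | or φ ψ ihφ ihψ =>
      intro hsz N s D₁ D₂ hD₁ hD₂ hs1 hs2
      rw [psize] at hsz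
      have hd : ∀ (m : ℕ) (s' : ℕ → Bool), (∀ i < N, s' i = s i) →
          ∃ t, (∀ i < m, t i = s' i) ∧ ∃ j < 2, t ∈ (fun j =>
            if j = 0 then {t | PSat t φ} else {t | PSat t ψ}) j := by
        intro m s' hss
        obtain ⟨t, htD, ht⟩ := hD₁ m s' hss
        have hst := hs1 t htD
        rw [PSat] at hst
        rcases hst with hA | hB
        · exact ⟨t, ht, 0, by omega, by simp only [if_pos rfl]; exact hA⟩
        · exact ⟨t, ht, 1, by omega, by simp only [if_neg one_ne_zero]; exact hB⟩
      obtain ⟨j, hj2, m, s', hm, hag, hDn⟩ := swd _ 2 N s hd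
      by_cases hj0 : j = 0
      · subst hj0
        simp only [if_pos rfl] at hDn
        exact ihφ (lt_of_le_of_lt le_self_nadd hsz) m s' _ D₂ hDn (hD₂.mono hm hag)
          (fun t ht => ht) (fun t ht hP => hs2 t ht (Or.inl hP))
      · simp only [if_neg hj0] at hDn
        exact ihψ (lt_of_le_of_lt le_nadd_self hsz) m s' _ D₂ hDn (hD₂.mono hm hag)
          (fun t ht => ht) (fun t ht hP => hs2 t ht (Or.inr hP))
    | iand f ihf =>
      intro hsz N s D₁ D₂ hD₁ hD₂ hs1 hs2
      rw [psize] at hsz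
      have hcast : ω * (((n + 1 : ℕ) : Ordinal) + 1) = ω * ((n : Ordinal) + 1) + ω := by
        rw [Nat.cast_succ, mul_add, mul_one]
      have hcomp : ∀ i, psize (f i) < ω * ((n : Ordinal) + 1) := by
        intro i
        by_contra hcon
        push_neg at hcon
        have h := keyA (γ := fun i => psize (f i)) (fun i => one_le_psize (f i)) hcon
        rw [← hcast] at h
        exact absurd hsz (not_lt.mpr h)
      have hbig : {i | ω ≤ psize (f i)}.Finite := by
        by_contra hcon
        have h := keyB (γ := fun i => psize (f i)) hcon
        have hle : ω * (((n + 1 : ℕ) : Ordinal) + 1) ≤ ω * ω := by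
          apply mul_le_mul_right
          have he : (((n + 1 : ℕ) : Ordinal) + 1) = ((n + 2 : ℕ) : Ordinal) := by push_cast; rw [add_assoc, one_add_one_eq_two]
          rw [he]
          exact (nat_lt_omega0 _).le
        exact absurd (h.trans_lt (hsz.trans_le hle)) (lt_irrefl _)
      have hsmall : ∀ i, psize (f i) < ω → ∀ t : ℕ → Bool, (∀ j < N, t j = s j) → PSat t (f i) :=
        fun i hi => finTrue (finitary_of_lt_omega0 hi) hD₁ (fun t ht => hs1 t ht i)
      set l := hbig.toFinset.toList with hl
      have hd : ∀ (m : ℕ) (s' : ℕ → Bool), (∀ i < N, s' i = s i) →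
          ∃ t, (∀ i < m, t i = s' i) ∧ ∃ j < l.length,
            t ∈ (fun j => D₂ ∩ {t | ¬ PSat t (f (l.getD j 0))}) j := by
        intro m s' hss
        obtain ⟨t, htD, ht⟩ := hD₂ (max m N) s' hss
        have htc : ∀ i < N, t i = s i :=
          fun i hi => (ht i (lt_of_lt_of_le hi (le_max_right m N))).trans (hss i hi)
        have hns : ¬ ∀ i, PSat t (f i) := hs2 t htD
        push_neg at hns
        obtain ⟨i, hi⟩ := hns
        have hbigi : ω ≤ psize (f i) := by
          by_contra hsm
          push_neg at hsm
          exact hi (hsmall i hsm t htc)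
        have hmem : i ∈ l := by
          rw [hl, Finset.mem_toList, Set.Finite.mem_toFinset]; exact hbigi
        obtain ⟨j, hjl, hji⟩ := List.mem_iff_getElem.mp hmem
        refine ⟨t, fun i2 hi2 => ht i2 (lt_of_lt_of_le hi2 (le_max_left m N)), j, hjl, htD, ?_⟩
        show ¬ PSat t (f (l.getD j 0))
        rw [List.getD_eq_getElem l 0 hjl, hji]
        exact hi
      obtain ⟨j, hjl, m, s', hm, hag, hDn⟩ := swd _ l.length N s hd
      exact ih (f (l.getD j 0)) (hcomp _) m s' D₁ _ (hD₁.mono hm hag) hDn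
        (fun t ht => hs1 t ht _) (fun t ht => ht.2)
    | ior f ihf =>
      intro hsz N s D₁ D₂ hD₁ hD₂ hs1 hs2
      rw [psize] at hsz
      have hcast : ω * (((n + 1 : ℕ) : Ordinal) + 1) = ω * ((n : Ordinal) + 1) + ω := by
        rw [Nat.cast_succ, mul_add, mul_one]
      have hcomp : ∀ i, psize (f i) < ω * ((n : Ordinal) + 1) := by
        intro i
        by_contra hcon
        push_neg at hcon
        have h := keyA (γ := fun i => psize (f i)) (fun i => one_le_psize (f i)) hcon
        rw [← hcast] at h
        exact absurd hsz (not_lt.mpr h)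
      have hbig : {i | ω ≤ psize (f i)}.Finite := by
        by_contra hcon
        have h := keyB (γ := fun i => psize (f i)) hcon
        have hle : ω * (((n + 1 : ℕ) : Ordinal) + 1) ≤ ω * ω := by
          apply mul_le_mul_right
          have he : (((n + 1 : ℕ) : Ordinal) + 1) = ((n + 2 : ℕ) : Ordinal) := by push_cast; rw [add_assoc, one_add_one_eq_two]
          rw [he]
          exact (nat_lt_omega0 _).le
        exact absurd (h.trans_lt (hsz.trans_le hle)) (lt_irrefl _)
      have hsmall : ∀ i, psize (f i) < ω → ∀ t : ℕ → Bool,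
          (∀ j < N, t j = s j) → ¬ PSat t (f i) :=
        fun i hi => finFalse (finitary_of_lt_omega0 hi) hD₂
          (fun t ht hP => hs2 t ht ⟨i, hP⟩)
      set l := hbig.toFinset.toList with hl
      have hd : ∀ (m : ℕ) (s' : ℕ → Bool), (∀ i < N, s' i = s i) →
          ∃ t, (∀ i < m, t i = s' i) ∧ ∃ j < l.length,
            t ∈ (fun j => {t | PSat t (f (l.getD j 0))}) j := by
        intro m s' hss
        obtain ⟨t, htD, ht⟩ := hD₁ (max m N) s' hss
        have htc : ∀ i < N, t i = s i :=
          fun i hi => (ht i (lt_of_lt_of_le hi (le_max_right m N))).trans (hss i hi)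
        obtain ⟨i, hi⟩ := hs1 t htD
        have hbigi : ω ≤ psize (f i) := by
          by_contra hsm
          push_neg at hsm
          exact hsmall i hsm t htc hi
        have hmem : i ∈ l := by
          rw [hl, Finset.mem_toList, Set.Finite.mem_toFinset]; exact hbigi
        obtain ⟨j, hjl, hji⟩ := List.mem_iff_getElem.mp hmem
        refine ⟨t, fun i2 hi2 => ht i2 (lt_of_lt_of_le hi2 (le_max_left m N)), j, hjl, ?_⟩
        show PSat t (f (l.getD j 0))
        rw [List.getD_eq_getElem l 0 hjl, hji]
        exact hi
      obtain ⟨j, hjl, m, s', hm, hag, hDn⟩ := swd _ l.length N s hd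
      exact ih (f (l.getD j 0)) (hcomp _) m s' _ D₂ hDn (hD₂.mono hm hag)
        (fun t ht => ht) (fun t ht hP => hs2 t ht ⟨_, hP⟩)

end OmegaSqAux

/-- Any propositional `L_{ω₁ω}`-formula separating two dense sets of infinite
binary strings has size at least `ω²`. -/
theorem omega_sq_le_psize_of_separates_dense (P₁ P₂ : Set (ℕ → Bool))
    (h₁ : Dense P₁) (h₂ : Dense P₂) (φ : PFml)
    (hsep₁ : ∀ t ∈ P₁, PSat t φ) (hsep₂ : ∀ t ∈ P₂, ¬ PSat t φ) :
    Ordinal.omega0 * Ordinal.omega0 ≤ psize φ := by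
  by_contra hcon
  push_neg at hcon
  obtain ⟨c, hc, hlt⟩ := (lt_mul_iff_of_isSuccLimit isSuccLimit_omega0).mp hcon
  obtain ⟨k, rfl⟩ := lt_omega0.mp hc
  have hlt' : psize φ < ω * ((k : Ordinal) + 1) :=
    hlt.trans_le (mul_le_mul_right (le_add_right le_rfl) ω)
  have hDn : ∀ (P : Set (ℕ → Bool)), Dense P → OmegaSqAux.Dn 0 (fun _ => false) P := by
    intro P hP m s' _
    have hopen : IsOpen {t : ℕ → Bool | ∀ i < m, t i = s' i} := by
      have he : {t : ℕ → Bool | ∀ i < m, t i = s' i} =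
          ⋂ i ∈ Finset.range m, {t : ℕ → Bool | t i = s' i} := by
        ext t; simp [Finset.mem_range]
      rw [he]
      refine isOpen_biInter_finset fun i _ => ?_
      have he2 : {t : ℕ → Bool | t i = s' i} = (fun t : ℕ → Bool => t i) ⁻¹' {s' i} := rfl
      rw [he2]
      exact (continuous_apply i).isOpen_preimage _ (isOpen_discrete _)
    obtain ⟨t, htP, ht⟩ := hP.exists_mem_open hopen ⟨s', fun i _ => rfl⟩
    exact ⟨t, htP, ht⟩
  exact OmegaSqAux.main k φ hlt' 0 (fun _ => false) P₁ P₂ (hDn P₁ h₁) (hDn P₂ h₂) hsep₁ hsep₂
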